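/- The expectation value of M_{N−k} ⊗ 1_k on the permutation-invariant state |PI_N⟩ = ∑ᵢ cᵢ|D_N^i⟩ equals 2^(N−k) · ∑_{s=0}^k C(k,s)·C(N,s)^(−1/2)·C(N,k−s)^(−1/2)·c_s·c_{N−k+s}, where M_{N−k} = 2^(N−k−1)(|D^0_{N−k}⟩⟨D^{N−k}_{N−k}| + h.c.) and |D^i_n⟩ are Dicke states. -/
import Mathlib


/-- Number of excitations (ones) of a computational basis state of n qubits. -/
def weight {n : ℕ} (x : Fin n → Fin 2) : ℕ :=
  (Finset.univ.filter (fun i => x i = 1)).card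

/-- The Dicke state |D_n^i⟩ = C(n,i)^(−1/2) ∑_{|x|=i} |x⟩, as a wavefunction. -/
noncomputable def dicke (n i : ℕ) : (Fin n → Fin 2) → ℂ :=
  fun x => if weight x = i then ((Real.sqrt (Nat.choose n i))⁻¹ : ℝ) else 0

/-- The permutation-invariant state |PI_N⟩ = ∑ᵢ cᵢ |D_N^i⟩ with real coefficients. -/
noncomputable def piState (N : ℕ) (c : ℕ → ℝ) : (Fin N → Fin 2) → ℂ :=
  fun x => ∑ i ∈ Finset.range (N + 1), (c i : ℂ) * dicke N i x


def glue {N k : ℕ} (hk : k ≤ N) (a : Fin (N-k) → Fin 2) (t : Fin k → Fin 2) :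
    Fin N → Fin 2 :=
  fun i => if h : (i : ℕ) < N - k then a ⟨i, h⟩ else t ⟨(i : ℕ) - (N - k), by omega⟩

def glueEquiv {N k : ℕ} (hk : k ≤ N) :
    ((Fin (N-k) → Fin 2) × (Fin k → Fin 2)) ≃ (Fin N → Fin 2) where
  toFun p := glue hk p.1 p.2
  invFun x := (fun j => x ⟨j, by omega⟩, fun j => x ⟨(N-k) + j, by omega⟩)
  left_inv p := by
    ext j
    · simp only [glue]
      rw [dif_pos j.isLt]
    · simp only [glue]
      rw [dif_neg (by omega)]
      congr 1
      ext
      simp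
  right_inv x := by
    funext i
    simp only [glue]
    by_cases h : (i : ℕ) < N - k
    · rw [dif_pos h]
    · rw [dif_neg h]
      congr 1
      ext
      simp
      omega

lemma weight_le {n : ℕ} (x : Fin n → Fin 2) : weight x ≤ n := by
  simpa [weight] using (Finset.card_filter_le Finset.univ (fun i => x i = 1))

lemma weight_glue {N k : ℕ} (hk : k ≤ N) (a : Fin (N-k) → Fin 2) (t : Fin k → Fin 2) :
    weight (glue hk a t) = weight a + weight t := by
  classical
  simp only [weight, Finset.card_filter]
  rw [← Finset.sum_filter_add_sum_filter_not Finset.univ (fun i : Fin N => (i : ℕ) < N - k)]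
  congr 1
  · refine Finset.sum_bij'
      (i := fun (i : Fin N) (hi : i ∈ Finset.univ.filter (fun i : Fin N => (i:ℕ) < N - k)) =>
        (⟨(i : ℕ), by simp at hi; exact hi⟩ : Fin (N-k)))
      (j := fun (j : Fin (N-k)) (_ : j ∈ Finset.univ) => (⟨(j : ℕ), by omega⟩ : Fin N))
      ?_ ?_ ?_ ?_ ?_
    · intro i hi; simp
    · intro j hj; simp
    · intro i hi; ext; simp
    · intro j hj; ext; simp
    · intro i hi
      simp only [Finset.mem_filter, Finset.mem_univ, true_and] at hi
      simp [glue, dif_pos hi]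
  · refine Finset.sum_bij'
      (i := fun (i : Fin N) (hi : i ∈ Finset.univ.filter (fun i : Fin N => ¬ (i:ℕ) < N - k)) =>
        (⟨(i : ℕ) - (N - k), by simp at hi; omega⟩ : Fin k))
      (j := fun (j : Fin k) (_ : j ∈ Finset.univ) => (⟨(N - k) + (j : ℕ), by omega⟩ : Fin N))
      ?_ ?_ ?_ ?_ ?_
    · intro i hi; simp
    · intro j hj; simp; omega
    · intro i hi
      simp only [Finset.mem_filter, Finset.mem_univ, true_and, not_lt] at hi
      ext; simp; omega
    · intro j hj; ext; simp
    · intro i hi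
      simp only [Finset.mem_filter, Finset.mem_univ, true_and, not_lt] at hi
      simp [glue, dif_neg (by omega : ¬ (i:ℕ) < N - k)]


lemma glue_head_iff {N k : ℕ} (hk : k < N) (a : Fin (N-k) → Fin 2) (t : Fin k → Fin 2)
    (v : Fin 2) :
    (∀ i : Fin N, (i : ℕ) < N - k → glue hk.le a t i = v) ↔ a = fun _ => v := by
  constructor
  · intro H
    funext j
    have hj : (j : ℕ) < N := lt_of_lt_of_le j.isLt (Nat.sub_le N k)
    have := H ⟨j, hj⟩ j.isLt
    rwa [glue, dif_pos] at this
  · rintro rfl i hi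
    rw [glue, dif_pos hi]

lemma glue_tail_iff {N k : ℕ} (hk : k < N) (a b : Fin (N-k) → Fin 2)
    (t u : Fin k → Fin 2) :
    (∀ i : Fin N, N - k ≤ (i : ℕ) → glue hk.le a t i = glue hk.le b u i) ↔ t = u := by
  constructor
  · intro H
    funext j
    have hj : N - k + (j : ℕ) < N := by omega
    have := H ⟨N - k + j, hj⟩ (by simp)
    rw [glue, glue, dif_neg (by simp), dif_neg (by simp)] at this
    simpa using this
  · rintro rfl i hi
    rw [glue, glue]
    by_cases hcase : (i : ℕ) < N - k
    · omega
    · rw [dif_neg hcase, dif_neg hcase]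

lemma card_weight_eq (k s : ℕ) :
    (Finset.univ.filter (fun t : Fin k → Fin 2 => weight t = s)).card = k.choose s := by
  classical
  have : k.choose s = (Finset.powersetCard s (Finset.univ : Finset (Fin k))).card := by
    rw [Finset.card_powersetCard, Finset.card_univ, Fintype.card_fin]
  rw [this]
  refine Finset.card_bij
    (fun t _ => Finset.univ.filter (fun j => t j = 1)) ?_ ?_ ?_
  · intro t ht
    simp only [Finset.mem_filter, Finset.mem_univ, true_and] at ht
    rw [Finset.mem_powersetCard_univ]
    exact ht
  · intro t1 h1 t2 h2 heq
    funext j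
    have hmem := Finset.ext_iff.mp heq j
    simp only [Finset.mem_filter, Finset.mem_univ, true_and] at hmem
    have v1 := (t1 j).isLt
    have v2 := (t2 j).isLt
    rw [Fin.ext_iff, Fin.ext_iff] at hmem
    apply Fin.ext
    simp only [Fin.val_one] at hmem
    omega
  · intro S hS
    rw [Finset.mem_powersetCard_univ] at hS
    have hfe : Finset.univ.filter (fun j => (if j ∈ S then (1:Fin 2) else 0) = 1) = S := by
      ext j
      simp only [Finset.mem_filter, Finset.mem_univ, true_and]
      by_cases hj : j ∈ S <;> simp [hj]
    refine ⟨fun j => if j ∈ S then 1 else 0, ?_, ?_⟩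
    · rw [Finset.mem_filter]
      refine ⟨Finset.mem_univ _, ?_⟩
      unfold weight
      rw [hfe]
      exact hS
    · simpa using hfe


lemma piState_eval (N : ℕ) (c : ℕ → ℝ) (x : Fin N → Fin 2) :
    piState N c x = ((c (weight x) * (Real.sqrt (Nat.choose N (weight x)))⁻¹ : ℝ) : ℂ) := by
  unfold piState dicke
  simp only [mul_ite, mul_zero]
  rw [Finset.sum_ite_eq, if_pos (Finset.mem_range.mpr (Nat.lt_succ_of_le (weight_le x)))]
  push_cast
  ring

/-- The operator M_{N−k} ⊗ 1_k, where
M_{N−k} = 2^(N−k−1)(|D^0⟩⟨D^{N−k}| + |D^{N−k}⟩⟨D^0|) acts on the first N−k qubits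
(note |D^0⟩ and |D^{N−k}⟩ are the all-zeros and all-ones basis states). -/
noncomputable def merminBlock (N k : ℕ) :
    Matrix (Fin N → Fin 2) (Fin N → Fin 2) ℂ :=
  fun x y =>
    (2 : ℂ) ^ (N - k - 1) *
      (if ((∀ i : Fin N, (i : ℕ) < N - k → x i = 0) ∧
            (∀ i : Fin N, (i : ℕ) < N - k → y i = 1)) ∨
          ((∀ i : Fin N, (i : ℕ) < N - k → x i = 1) ∧
            (∀ i : Fin N, (i : ℕ) < N - k → y i = 0)) then 1 else 0) *
      (if ∀ i : Fin N, N - k ≤ (i : ℕ) → x i = y i then 1 else 0)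

theorem stmt19 (N k : ℕ) (h : k < N) (c : ℕ → ℝ)
    (hnorm : ∑ i ∈ Finset.range (N + 1), (c i) ^ 2 = 1) :
    (∑ x : Fin N → Fin 2, ∑ y : Fin N → Fin 2,
        (starRingEnd ℂ) (piState N c x) * merminBlock N k x y * piState N c y) =
      ((∑ s ∈ Finset.range (k + 1),
          2 ^ (N - k) * (Nat.choose k s : ℝ) /
            Real.sqrt ((Nat.choose N s : ℝ) * (Nat.choose N (k - s) : ℝ)) *
            c s * c (N - k + s) : ℝ) : ℂ) := by
  classical
  have hk : k ≤ N := h.le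
  set f0 : Fin (N-k) → Fin 2 := fun _ => 0 with hf0
  set f1 : Fin (N-k) → Fin 2 := fun _ => 1 with hf1
  have hne : f0 ≠ f1 := by
    intro hc
    have := congrFun hc ⟨0, by omega⟩
    simp [hf0, hf1] at this
  have w0 : weight f0 = 0 := by simp [weight, hf0]
  have w1 : weight f1 = N - k := by
    simp [weight, hf1, Finset.filter_true_of_mem]
  -- merminBlock on glued states
  have hM : ∀ (a b : Fin (N-k) → Fin 2) (t u : Fin k → Fin 2),
      merminBlock N k (glue hk a t) (glue hk b u) =
        (2:ℂ) ^ (N - k - 1) *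
          (if (a = f0 ∧ b = f1) ∨ (a = f1 ∧ b = f0) then 1 else 0) *
          (if t = u then 1 else 0) := by
    intro a b t u
    unfold merminBlock
    congr 1
    · congr 1
      exact if_congr (or_congr
        (and_congr (glue_head_iff h a t 0) (glue_head_iff h b u 1))
        (and_congr (glue_head_iff h a t 1) (glue_head_iff h b u 0))) rfl rfl
    · exact if_congr (glue_tail_iff h a b t u) rfl rfl
  -- step 1 : reindex via glueEquiv
  have step1 : (∑ x : Fin N → Fin 2, ∑ y : Fin N → Fin 2,
        (starRingEnd ℂ) (piState N c x) * merminBlock N k x y * piState N c y) =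
      ∑ t : Fin k → Fin 2, ∑ a : Fin (N-k) → Fin 2, ∑ b : Fin (N-k) → Fin 2,
        ∑ u : Fin k → Fin 2,
        (starRingEnd ℂ) (piState N c (glue hk a t)) *
          merminBlock N k (glue hk a t) (glue hk b u) * piState N c (glue hk b u) := by
    rw [← Equiv.sum_comp (glueEquiv hk)
      (fun x => ∑ y : Fin N → Fin 2,
        (starRingEnd ℂ) (piState N c x) * merminBlock N k x y * piState N c y)]
    rw [Fintype.sum_prod_type]
    rw [Finset.sum_comm]
    refine Finset.sum_congr rfl fun t _ => ?_
    refine Finset.sum_congr rfl fun a _ => ?_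
    rw [← Equiv.sum_comp (glueEquiv hk)
      (fun y => (starRingEnd ℂ) (piState N c (glueEquiv hk (a, t))) *
        merminBlock N k (glueEquiv hk (a, t)) y * piState N c y)]
    rw [Fintype.sum_prod_type]
    rfl
  rw [step1]
  -- step 2 : collapse the u-sum
  have step2 : ∀ (a b : Fin (N-k) → Fin 2) (t : Fin k → Fin 2),
      (∑ u : Fin k → Fin 2,
        (starRingEnd ℂ) (piState N c (glue hk a t)) *
          merminBlock N k (glue hk a t) (glue hk b u) * piState N c (glue hk b u)) =
      (if (a = f0 ∧ b = f1) ∨ (a = f1 ∧ b = f0) then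
        (2:ℂ) ^ (N - k - 1) * (starRingEnd ℂ) (piState N c (glue hk a t)) *
          piState N c (glue hk b t) else 0) := by
    intro a b t
    rw [Finset.sum_eq_single t]
    · rw [hM]
      by_cases hab : (a = f0 ∧ b = f1) ∨ (a = f1 ∧ b = f0)
      · rw [if_pos hab, if_pos hab, if_pos rfl]
        ring
      · rw [if_neg hab, if_neg hab]
        ring
    · intro u _ hu
      rw [hM, if_neg (show ¬ t = u from fun hc => hu hc.symm)]
      ring
    · intro hc
      exact absurd (Finset.mem_univ t) hc
  -- step 3 : collapse the a, b sums
  have step3 : ∀ t : Fin k → Fin 2,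
      (∑ a : Fin (N-k) → Fin 2, ∑ b : Fin (N-k) → Fin 2,
        (if (a = f0 ∧ b = f1) ∨ (a = f1 ∧ b = f0) then
          (2:ℂ) ^ (N - k - 1) * (starRingEnd ℂ) (piState N c (glue hk a t)) *
            piState N c (glue hk b t) else 0)) =
      (2:ℂ) ^ (N - k - 1) * ((starRingEnd ℂ) (piState N c (glue hk f0 t)) *
          piState N c (glue hk f1 t) +
        (starRingEnd ℂ) (piState N c (glue hk f1 t)) * piState N c (glue hk f0 t)) := by
    intro t
    have hsplit : ∀ (a b : Fin (N-k) → Fin 2),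
        (if (a = f0 ∧ b = f1) ∨ (a = f1 ∧ b = f0) then
          (2:ℂ) ^ (N - k - 1) * (starRingEnd ℂ) (piState N c (glue hk a t)) *
            piState N c (glue hk b t) else 0) =
        (if a = f0 ∧ b = f1 then
          (2:ℂ) ^ (N - k - 1) * (starRingEnd ℂ) (piState N c (glue hk a t)) *
            piState N c (glue hk b t) else 0) +
        (if a = f1 ∧ b = f0 then
          (2:ℂ) ^ (N - k - 1) * (starRingEnd ℂ) (piState N c (glue hk a t)) *
            piState N c (glue hk b t) else 0) := by
      intro a b
      by_cases h1 : a = f0 ∧ b = f1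
      · have h2 : ¬ (a = f1 ∧ b = f0) := by
          rintro ⟨ha, _⟩
          exact hne (h1.1 ▸ ha)
        rw [if_pos (Or.inl h1), if_pos h1, if_neg h2, add_zero]
      · by_cases h2 : a = f1 ∧ b = f0
        · rw [if_pos (Or.inr h2), if_neg h1, if_pos h2, zero_add]
        · rw [if_neg (by tauto), if_neg h1, if_neg h2, add_zero]
    simp only [hsplit, Finset.sum_add_distrib]
    have hcollapse : ∀ (c0 c1 : Fin (N-k) → Fin 2)
        (G : (Fin (N-k) → Fin 2) → (Fin (N-k) → Fin 2) → ℂ),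
        (∑ a : Fin (N-k) → Fin 2, ∑ b : Fin (N-k) → Fin 2,
          if a = c0 ∧ b = c1 then G a b else 0) = G c0 c1 := by
      intro c0 c1 G
      rw [Finset.sum_eq_single c0]
      · rw [Finset.sum_eq_single c1]
        · rw [if_pos ⟨rfl, rfl⟩]
        · intro b _ hb
          rw [if_neg (fun hc => hb hc.2)]
        · intro hc
          exact absurd (Finset.mem_univ c1) hc
      · intro a _ ha
        refine Finset.sum_eq_zero fun b _ => ?_
        rw [if_neg (fun hc => ha hc.1)]
      · intro hc
        exact absurd (Finset.mem_univ c0) hc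
    rw [hcollapse f0 f1, hcollapse f1 f0]
    ring
  simp only [step2, step3]
  have hg0 : ∀ t : Fin k → Fin 2, piState N c (glue hk f0 t) =
      ((c (weight t) * (Real.sqrt (N.choose (weight t)))⁻¹ : ℝ) : ℂ) := by
    intro t
    rw [piState_eval, weight_glue, w0, zero_add]
  have hg1 : ∀ t : Fin k → Fin 2, piState N c (glue hk f1 t) =
      ((c (N - k + weight t) * (Real.sqrt (N.choose (N - k + weight t)))⁻¹ : ℝ) : ℂ) := by
    intro t
    rw [piState_eval, weight_glue, w1]
  have hterm : ∀ t : Fin k → Fin 2,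
      (2:ℂ) ^ (N - k - 1) *
        ((starRingEnd ℂ) (piState N c (glue hk f0 t)) * piState N c (glue hk f1 t) +
          (starRingEnd ℂ) (piState N c (glue hk f1 t)) * piState N c (glue hk f0 t)) =
      (((2:ℝ) ^ (N - k) * (c (weight t) * (Real.sqrt (N.choose (weight t)))⁻¹) *
          (c (N - k + weight t) * (Real.sqrt (N.choose (N - k + weight t)))⁻¹) : ℝ) : ℂ) := by
    intro t
    rw [hg0, hg1, Complex.conj_ofReal, Complex.conj_ofReal]
    push_cast
    have h2 : (2:ℂ) ^ (N - k) = 2 ^ (N - k - 1) * 2 := by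
      rw [← pow_succ]
      congr 1
      omega
    rw [h2]
    ring
  simp only [hterm]
  rw [← Complex.ofReal_sum]
  congr 1
  rw [← Finset.sum_fiberwise_of_maps_to (g := weight)
    (fun (t : Fin k → Fin 2) (_ : t ∈ Finset.univ) =>
      Finset.mem_range.mpr (Nat.lt_succ_of_le (weight_le t)))]
  refine Finset.sum_congr rfl fun s hs => ?_
  have hs' : s ≤ k := Nat.lt_succ_iff.mp (Finset.mem_range.mp hs)
  rw [Finset.sum_congr rfl
    (fun t ht => by rw [(Finset.mem_filter.mp ht).2] :
      ∀ t ∈ Finset.univ.filter (fun t : Fin k → Fin 2 => weight t = s), _ =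
        (2:ℝ) ^ (N - k) * (c s * (Real.sqrt (N.choose s))⁻¹) *
          (c (N - k + s) * (Real.sqrt (N.choose (N - k + s)))⁻¹))]
  rw [Finset.sum_const, card_weight_eq, nsmul_eq_mul]
  have hsym : (N.choose (N - k + s)) = N.choose (k - s) := by
    have h1 : N - (k - s) = N - k + s := by omega
    rw [← h1]
    exact Nat.choose_symm (by omega)
  rw [hsym, Real.sqrt_mul (by positivity), div_eq_mul_inv, mul_inv]
  ring
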